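/- arXiv:0806.0050 — 2 statements merged into one kernel-verified Lean document; each statement's English description precedes it below -/
import Mathlib

section
/- Every 4-dimensional doubly even binary linear code in (ZMod 2)^8 is permutation-equivalent to e_8: for any doubly even ℤ/2-linear subspace C of (ZMod 2)^8 of dimension 4, there exists a permutation σ of the 8 coordinates such that permuting the coordinates of all codewords of e_8 by σ yields exactly C. -/
/-- The weight of a vector in `(ZMod 2)^N`: the number of coordinates equal to `1`. -/
def wt {N : ℕ} (v : Fin N → ZMod 2) : ℕ :=
  (Finset.univ.filter (fun i => v i = 1)).card

/-- The code `e₈ ⊆ (ZMod 2)^8`, spanned by 11110000, 00111100, 00001111, 10101010. -/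
def e8 : Submodule (ZMod 2) (Fin 8 → ZMod 2) :=
  Submodule.span (ZMod 2)
    {![1,1,1,1,0,0,0,0], ![0,0,1,1,1,1,0,0], ![0,0,0,0,1,1,1,1], ![1,0,1,0,1,0,1,0]}

namespace E8Aux

open Finset Submodule

abbrev V8 := Fin 8 → ZMod 2

def ones : V8 := fun _ => 1
def gA : V8 := ![1,1,1,1,0,0,0,0]
def gB : V8 := ![0,0,1,1,1,1,0,0]
def gC : V8 := ![0,0,0,0,1,1,1,1]
def gD : V8 := ![1,0,1,0,1,0,1,0]

lemma sumZ2 (f : ZMod 2 → ℕ) : ∑ x, f x = f 0 + f 1 := Fin.sum_univ_two f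

lemma fiber {β : Type} [Fintype β] [DecidableEq β] (v : Fin 8 → β) (p : β → Prop)
    [DecidablePred p] :
    (univ.filter fun j => p (v j)).card
      = ∑ b : β, if p b then (univ.filter fun j => v j = b).card else 0 := by
  rw [← Finset.sum_filter]
  rw [Finset.card_eq_sum_card_fiberwise (f := v) (t := univ.filter p)
      (by intro x hx; simp only [Finset.mem_coe, mem_filter, mem_univ, true_and] at hx ⊢; exact hx)]
  refine Finset.sum_congr rfl fun b hb => ?_
  simp only [mem_filter, mem_univ, true_and] at hb
  congr 1
  ext j
  simp only [mem_filter, mem_univ, true_and, and_iff_right_iff_imp]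
  intro h; rw [h]; exact hb

lemma wt_combo3 (e1 e2 e3 : V8) (a1 a2 a3 : ZMod 2) :
    wt (a1 • e1 + a2 • e2 + a3 • e3)
      = ∑ b : ZMod 2 × ZMod 2 × ZMod 2,
          if a1 * b.1 + a2 * b.2.1 + a3 * b.2.2 = 1 then
            (univ.filter fun j => (e1 j, e2 j, e3 j) = b).card else 0 := by
  rw [← fiber (fun j => (e1 j, e2 j, e3 j)) (fun b => a1 * b.1 + a2 * b.2.1 + a3 * b.2.2 = 1)]
  simp [wt, Pi.add_apply, Pi.smul_apply, smul_eq_mul]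

lemma wt_combo4 (e1 e2 e3 e4 : V8) (a1 a2 a3 a4 : ZMod 2) :
    wt (a1 • e1 + a2 • e2 + a3 • e3 + a4 • e4)
      = ∑ b : ZMod 2 × ZMod 2 × ZMod 2 × ZMod 2,
          if a1 * b.1 + a2 * b.2.1 + a3 * b.2.2.1 + a4 * b.2.2.2 = 1 then
            (univ.filter fun j => (e1 j, e2 j, e3 j, e4 j) = b).card else 0 := by
  rw [← fiber (fun j => (e1 j, e2 j, e3 j, e4 j))
      (fun b => a1 * b.1 + a2 * b.2.1 + a3 * b.2.2.1 + a4 * b.2.2.2 = 1)]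
  simp [wt, Pi.add_apply, Pi.smul_apply, smul_eq_mul]

lemma wt_le8 (v : V8) : wt v ≤ 8 :=
  (Finset.card_filter_le _ _).trans (by simp)

lemma eq_zero_of_wt {v : V8} (h : wt v = 0) : v = 0 := by
  have h' := Finset.card_eq_zero.mp h
  funext i
  have hi : ¬ v i = 1 := by
    intro hvi
    have : i ∈ Finset.univ.filter (fun i => v i = 1) := by simp [hvi]
    simp [h'] at this
  revert hi
  have : ∀ a : ZMod 2, ¬ a = 1 → a = 0 := by decide
  exact this (v i)

lemma eq_ones_of_wt {v : V8} (h : wt v = 8) : v = ones := by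
  have h' : (Finset.univ.filter (fun i => v i = 1)) = Finset.univ :=
    Finset.eq_univ_of_card _ (by simpa [wt] using h)
  funext i
  have : i ∈ Finset.univ.filter (fun i => v i = 1) := by rw [h']; exact Finset.mem_univ i
  simpa [ones] using (Finset.mem_filter.mp this).2

lemma card_one_existsUnique {p : Fin 8 → Prop} [DecidablePred p]
    (h : (univ.filter p).card = 1) : ∃! j, p j := by
  obtain ⟨a, ha⟩ := Finset.card_eq_one.mp h
  refine ⟨a, ?_, ?_⟩
  · have : a ∈ univ.filter p := ha ▸ Finset.mem_singleton_self a
    exact (Finset.mem_filter.mp this).2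
  · intro j hj
    have : j ∈ univ.filter p := Finset.mem_filter.mpr ⟨Finset.mem_univ j, hj⟩
    rw [ha] at this
    exact Finset.mem_singleton.mp this

lemma indep4 {f1 f2 f3 f4 : V8} (h : LinearIndependent (ZMod 2) ![f1, f2, f3, f4])
    {a1 a2 a3 a4 : ZMod 2} (hz : a1 • f1 + a2 • f2 + a3 • f3 + a4 • f4 = 0) :
    a1 = 0 ∧ a2 = 0 ∧ a3 = 0 ∧ a4 = 0 := by
  have h' := Fintype.linearIndependent_iff.mp h ![a1,a2,a3,a4] (by
    have e : (∑ i, ![a1,a2,a3,a4] i • ![f1,f2,f3,f4] i)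
        = a1 • f1 + a2 • f2 + a3 • f3 + a4 • f4 := by
      simp [Fin.sum_univ_four]
    rw [e, hz])
  exact ⟨h' 0, h' 1, h' 2, h' 3⟩

lemma range4 (a b c d : V8) : Set.range ![a, b, c, d] = {a, b, c, d} := by
  ext x
  simp [Matrix.range_cons, Matrix.range_empty]
  tauto

lemma range3 (a b c : V8) : Set.range ![a, b, c] = {a, b, c} := by
  ext x
  simp [Matrix.range_cons, Matrix.range_empty]
  tauto

lemma range1 (a : V8) : Set.range ![a] = {a} := by
  ext x
  simp [Matrix.range_cons, Matrix.range_empty]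

lemma setcard3 (a b c : V8) : ({a, b, c} : Set V8).toFinset.card ≤ 3 := by
  classical
  rw [Set.toFinset_insert, Set.toFinset_insert, Set.toFinset_singleton]
  have h0 := Finset.card_insert_le a (insert b ({c} : Finset V8))
  have h1 := Finset.card_insert_le b ({c} : Finset V8)
  have h2 := Finset.card_singleton c
  omega

lemma pick3 {C : Submodule (ZMod 2) V8} (hdim : Module.finrank (ZMod 2) C = 4)
    (a b c : V8) : ∃ x ∈ C, x ∉ span (ZMod 2) ({a, b, c} : Set V8) := by
  by_contra h
  push_neg at h
  have hle : C ≤ span (ZMod 2) ({a, b, c} : Set V8) := fun x hx => h x hx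
  have h1 : Module.finrank (ZMod 2) C
      ≤ Module.finrank (ZMod 2) (span (ZMod 2) ({a, b, c} : Set V8)) :=
    Submodule.finrank_mono hle
  have h2 := finrank_span_le_card (R := ZMod 2) ({a, b, c} : Set V8)
  have h3 := setcard3 a b c
  omega

lemma spanE8 : span (ZMod 2) (Set.range ![gD, gB, gA, ones]) = e8 := by
  rw [range4]
  have he8 : e8 = span (ZMod 2) ({gA, gB, gC, gD} : Set V8) := rfl
  rw [he8]
  have hones : ones = gA + gC := by decide
  have hgC : gC = gA + ones := by decide
  apply le_antisymm
  · rw [span_le]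
    intro x hx
    simp only [Set.mem_insert_iff, Set.mem_singleton_iff] at hx
    rcases hx with rfl | rfl | rfl | rfl
    · exact subset_span (by simp)
    · exact subset_span (by simp)
    · exact subset_span (by simp)
    · rw [hones]
      exact add_mem (subset_span (by simp)) (subset_span (by simp))
  · rw [span_le]
    intro x hx
    simp only [Set.mem_insert_iff, Set.mem_singleton_iff] at hx
    rcases hx with rfl | rfl | rfl | rfl
    · exact subset_span (by simp)
    · exact subset_span (by simp)
    · rw [hgC]
      exact add_mem (subset_span (by simp)) (subset_span (by simp))
    · exact subset_span (by simp)

lemma ginj : ∀ i i' : Fin 8, gA i = gA i' → gB i = gB i' → gD i = gD i' → i = i' := by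
  decide

lemma add_self_eq_zero (v : V8) : v + v = 0 := by
  funext i
  have : ∀ a : ZMod 2, a + a = 0 := by decide
  exact this (v i)

end E8Aux

open Finset Submodule E8Aux in
/-- Every 4-dimensional doubly even binary linear code of length 8 is
permutation-equivalent to `e₈`. -/
theorem doublyEven_dim4_len8_perm_equiv_e8 (C : Submodule (ZMod 2) (Fin 8 → ZMod 2))
    (hde : ∀ c ∈ C, 4 ∣ wt c)
    (hdim : Module.finrank (ZMod 2) C = 4) :
    ∃ σ : Equiv.Perm (Fin 8),
      Submodule.map (LinearMap.funLeft (ZMod 2) (ZMod 2) σ) e8 = C := by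
  classical
  -- generic weight fact
  have wt4 : ∀ c ∈ C, c ≠ 0 → c ≠ ones → wt c = 4 := by
    intro c hc h0 h8
    have hdvd := hde c hc
    have hle := wt_le8 c
    have hw0 : wt c ≠ 0 := fun h => h0 (eq_zero_of_wt h)
    have hw8 : wt c ≠ 8 := fun h => h8 (eq_ones_of_wt h)
    omega
  -- Step 1: the all-ones vector is in C
  have honesC : ones ∈ C := by
    by_contra hno
    -- pick 4 independent vectors in C
    obtain ⟨e1, he1C, he1⟩ := pick3 hdim 0 0 0
    obtain ⟨e2, he2C, he2⟩ := pick3 hdim e1 e1 e1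
    obtain ⟨e3, he3C, he3⟩ := pick3 hdim e2 e1 e1
    obtain ⟨e4, he4C, he4⟩ := pick3 hdim e3 e2 e1
    have he1' : e1 ∉ span (ZMod 2) (Set.range (![] : Fin 0 → V8)) := by
      have : ({(0:V8), 0, 0} : Set V8) = {0} := by simp
      rw [this, span_zero_singleton] at he1
      simpa [Matrix.range_empty, span_empty] using he1
    have he2' : e2 ∉ span (ZMod 2) (Set.range ![e1]) := by
      have : ({e1, e1, e1} : Set V8) = {e1} := by simp
      rw [this] at he2
      rwa [range1]
    have he3' : e3 ∉ span (ZMod 2) (Set.range ![e2, e1]) := by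
      have h23 : Set.range ![e2, e1] = ({e2, e1, e1} : Set V8) := by
        ext x; simp [Matrix.range_cons, Matrix.range_empty]; tauto
      rwa [h23]
    have he4' : e4 ∉ span (ZMod 2) (Set.range ![e3, e2, e1]) := by rwa [range3]
    have hF : LinearIndependent (ZMod 2) ![e4, e3, e2, e1] :=
      linearIndependent_fin_cons.mpr ⟨linearIndependent_fin_cons.mpr
        ⟨linearIndependent_fin_cons.mpr ⟨linearIndependent_fin_cons.mpr
          ⟨linearIndependent_empty_type, he1'⟩, he2'⟩, he3'⟩, he4'⟩
    -- every nonzero combination has weight 4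
    have key : ∀ a1 a2 a3 a4 : ZMod 2, ¬(a1 = 0 ∧ a2 = 0 ∧ a3 = 0 ∧ a4 = 0) →
        (∑ b : ZMod 2 × ZMod 2 × ZMod 2 × ZMod 2,
          if a1 * b.1 + a2 * b.2.1 + a3 * b.2.2.1 + a4 * b.2.2.2 = 1 then
            (univ.filter fun j => (e1 j, e2 j, e3 j, e4 j) = b).card else 0) = 4 := by
      intro a1 a2 a3 a4 ha
      rw [← wt_combo4]
      set c := a1 • e1 + a2 • e2 + a3 • e3 + a4 • e4 with hc
      have hcC : c ∈ C :=
        add_mem (add_mem (add_mem (smul_mem C a1 he1C) (smul_mem C a2 he2C))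
          (smul_mem C a3 he3C)) (smul_mem C a4 he4C)
      refine wt4 c hcC ?_ ?_
      · intro h0
        have hz : a4 • e4 + a3 • e3 + a2 • e2 + a1 • e1 = 0 := by
          rw [← h0, hc]; abel
        obtain ⟨h4, h3, h2, h1⟩ := indep4 hF hz
        exact ha ⟨h1, h2, h3, h4⟩
      · intro h1
        exact hno (h1 ▸ hcC)
    have htot := fiber (fun j => (e1 j, e2 j, e3 j, e4 j)) (fun _ => True)
    have h0001 := key 0 0 0 1 (by decide)
    have h0010 := key 0 0 1 0 (by decide)
    have h0011 := key 0 0 1 1 (by decide)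
    have h0100 := key 0 1 0 0 (by decide)
    have h0101 := key 0 1 0 1 (by decide)
    have h0110 := key 0 1 1 0 (by decide)
    have h0111 := key 0 1 1 1 (by decide)
    have h1000 := key 1 0 0 0 (by decide)
    have h1001 := key 1 0 0 1 (by decide)
    have h1010 := key 1 0 1 0 (by decide)
    have h1011 := key 1 0 1 1 (by decide)
    have h1100 := key 1 1 0 0 (by decide)
    have h1101 := key 1 1 0 1 (by decide)
    have h1110 := key 1 1 1 0 (by decide)
    have h1111 := key 1 1 1 1 (by decide)
    simp (config := { decide := true }) only [Fintype.sum_prod_type, sumZ2, Prod.mk.injEq,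
      if_true, if_false, add_zero, zero_add, Finset.filter_true, Finset.card_univ,
      Fintype.card_fin]
      at htot h0001 h0010 h0011 h0100 h0101 h0110 h0111 h1000 h1001 h1010 h1011 h1100
        h1101 h1110 h1111
    omega
  -- Step 2: pick d1, d2, d3 completing `ones` to a basis of C
  obtain ⟨d1, hd1C, hd1⟩ := pick3 hdim ones ones ones
  obtain ⟨d2, hd2C, hd2⟩ := pick3 hdim d1 ones ones
  obtain ⟨d3, hd3C, hd3⟩ := pick3 hdim d2 d1 ones
  have hones0 : ones ∉ span (ZMod 2) (Set.range (![] : Fin 0 → V8)) := by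
    simp only [Matrix.range_empty, span_empty, Submodule.mem_bot]
    intro h
    exact absurd (congrFun h 0) (by decide)
  have hd1' : d1 ∉ span (ZMod 2) (Set.range ![ones]) := by
    have : ({ones, ones, ones} : Set V8) = {ones} := by simp
    rw [this] at hd1
    rwa [range1]
  have hd2' : d2 ∉ span (ZMod 2) (Set.range ![d1, ones]) := by
    have h2 : Set.range ![d1, ones] = ({d1, ones, ones} : Set V8) := by
      ext x; simp [Matrix.range_cons, Matrix.range_empty]; tauto
    rwa [h2]
  have hd3' : d3 ∉ span (ZMod 2) (Set.range ![d2, d1, ones]) := by rwa [range3]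
  have hF : LinearIndependent (ZMod 2) ![d3, d2, d1, ones] :=
    linearIndependent_fin_cons.mpr ⟨linearIndependent_fin_cons.mpr
      ⟨linearIndependent_fin_cons.mpr ⟨linearIndependent_fin_cons.mpr
        ⟨linearIndependent_empty_type, hones0⟩, hd1'⟩, hd2'⟩, hd3'⟩
  -- atoms of (d1, d2, d3) are singletons
  have key : ∀ a1 a2 a3 : ZMod 2, ¬(a1 = 0 ∧ a2 = 0 ∧ a3 = 0) →
      (∑ b : ZMod 2 × ZMod 2 × ZMod 2,
        if a1 * b.1 + a2 * b.2.1 + a3 * b.2.2 = 1 then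
          (univ.filter fun j => (d1 j, d2 j, d3 j) = b).card else 0) = 4 := by
    intro a1 a2 a3 ha
    rw [← wt_combo3]
    set c := a1 • d1 + a2 • d2 + a3 • d3 with hc
    have hcC : c ∈ C :=
      add_mem (add_mem (smul_mem C a1 hd1C) (smul_mem C a2 hd2C)) (smul_mem C a3 hd3C)
    refine wt4 c hcC ?_ ?_
    · intro h0
      have hz : a3 • d3 + a2 • d2 + a1 • d1 + (0 : ZMod 2) • ones = 0 := by
        rw [zero_smul, add_zero, ← h0, hc]; abel
      obtain ⟨h3, h2, h1, _⟩ := indep4 hF hz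
      exact ha ⟨h1, h2, h3⟩
    · intro h1
      have hz : a3 • d3 + a2 • d2 + a1 • d1 + (1 : ZMod 2) • ones = 0 := by
        rw [one_smul]
        have : a3 • d3 + a2 • d2 + a1 • d1 = c := by rw [hc]; abel
        rw [this, h1, E8Aux.add_self_eq_zero]
      obtain ⟨_, _, _, habs⟩ := indep4 hF hz
      exact absurd habs (by decide)
  have htot := fiber (fun j => (d1 j, d2 j, d3 j)) (fun _ => True)
  have h001 := key 0 0 1 (by decide)
  have h010 := key 0 1 0 (by decide)
  have h011 := key 0 1 1 (by decide)
  have h100 := key 1 0 0 (by decide)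
  have h101 := key 1 0 1 (by decide)
  have h110 := key 1 1 0 (by decide)
  have h111 := key 1 1 1 (by decide)
  simp (config := { decide := true }) only [Fintype.sum_prod_type, sumZ2, Prod.mk.injEq,
    if_true, if_false, add_zero, zero_add, Finset.filter_true, Finset.card_univ,
    Fintype.card_fin]
    at htot h001 h010 h011 h100 h101 h110 h111
  have hatoms :
      (univ.filter fun j => d1 j = 0 ∧ d2 j = 0 ∧ d3 j = 0).card = 1 ∧
      (univ.filter fun j => d1 j = 0 ∧ d2 j = 0 ∧ d3 j = 1).card = 1 ∧
      (univ.filter fun j => d1 j = 0 ∧ d2 j = 1 ∧ d3 j = 0).card = 1 ∧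
      (univ.filter fun j => d1 j = 0 ∧ d2 j = 1 ∧ d3 j = 1).card = 1 ∧
      (univ.filter fun j => d1 j = 1 ∧ d2 j = 0 ∧ d3 j = 0).card = 1 ∧
      (univ.filter fun j => d1 j = 1 ∧ d2 j = 0 ∧ d3 j = 1).card = 1 ∧
      (univ.filter fun j => d1 j = 1 ∧ d2 j = 1 ∧ d3 j = 0).card = 1 ∧
      (univ.filter fun j => d1 j = 1 ∧ d2 j = 1 ∧ d3 j = 1).card = 1 := by
    omega
  obtain ⟨hn000, hn001, hn010, hn011, hn100, hn101, hn110, hn111⟩ := hatoms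
  have u000 := card_one_existsUnique hn000
  have u001 := card_one_existsUnique hn001
  have u010 := card_one_existsUnique hn010
  have u011 := card_one_existsUnique hn011
  have u100 := card_one_existsUnique hn100
  have u101 := card_one_existsUnique hn101
  have u110 := card_one_existsUnique hn110
  have u111 := card_one_existsUnique hn111
  -- build the permutation
  have hex : ∀ i : Fin 8, ∃ j, d1 j = gA i ∧ d2 j = gB i ∧ d3 j = gD i := by
    intro i
    fin_cases i
    · exact u101.exists
    · exact u100.exists
    · exact u111.exists
    · exact u110.exists
    · exact u011.exists
    · exact u010.exists
    · exact u001.exists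
    · exact u000.exists
  choose t ht using hex
  have tinj : Function.Injective t := by
    intro i i' hii
    have h1 : gA i = gA i' := by rw [← (ht i).1, ← (ht i').1, hii]
    have h2 : gB i = gB i' := by rw [← (ht i).2.1, ← (ht i').2.1, hii]
    have h3 : gD i = gD i' := by rw [← (ht i).2.2, ← (ht i').2.2, hii]
    exact ginj i i' h1 h2 h3
  let τ : Equiv.Perm (Fin 8) := Equiv.ofBijective t (Finite.injective_iff_bijective.mp tinj)
  -- C as a span
  have hle : span (ZMod 2) (Set.range ![d3, d2, d1, ones]) ≤ C := by
    rw [span_le, range4]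
    intro x hx
    simp only [Set.mem_insert_iff, Set.mem_singleton_iff] at hx
    rcases hx with rfl | rfl | rfl | rfl
    · exact hd3C
    · exact hd2C
    · exact hd1C
    · exact honesC
  have hCspan : span (ZMod 2) (Set.range ![d3, d2, d1, ones]) = C :=
    Submodule.eq_of_le_of_finrank_le hle (by
      rw [finrank_span_eq_card hF, hdim]; simp)
  have hmap : Submodule.map (LinearMap.funLeft (ZMod 2) (ZMod 2) ⇑τ) C = e8 := by
    rw [← hCspan, Submodule.map_span, ← Set.range_comp]
    have hcomp : (⇑(LinearMap.funLeft (ZMod 2) (ZMod 2) ⇑τ)) ∘ ![d3, d2, d1, ones]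
        = ![gD, gB, gA, ones] := by
      funext i
      fin_cases i
      · exact funext fun k => (ht k).2.2
      · exact funext fun k => (ht k).2.1
      · exact funext fun k => (ht k).1
      · rfl
    rw [hcomp, spanE8]
  refine ⟨τ⁻¹, ?_⟩
  rw [← hmap, ← Submodule.map_comp]
  have hid : (LinearMap.funLeft (ZMod 2) (ZMod 2) ⇑τ⁻¹).comp
      (LinearMap.funLeft (ZMod 2) (ZMod 2) ⇑τ) = LinearMap.id :=
    LinearMap.ext fun v => funext fun i => by
      simp [LinearMap.funLeft_apply, Function.comp]
  rw [hid, Submodule.map_id]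
end

section
/- The automorphism group of the code e_7 has order 168: the set of permutations σ of the 7 coordinate positions such that permuting the coordinates of every codeword of e_7 by σ again yields a codeword of e_7 forms a group of cardinality 168. -/
set_option maxRecDepth 100000
set_option maxHeartbeats 4000000

/-- The code `e₇ ⊆ (ZMod 2)^7`, spanned by 1111000, 0011110, 1010101. -/
def e7 : Submodule (ZMod 2) (Fin 7 → ZMod 2) :=
  Submodule.span (ZMod 2) {![1,1,1,1,0,0,0], ![0,0,1,1,1,1,0], ![1,0,1,0,1,0,1]}

/-- The eight codewords of `e7`. -/
def S : Finset (Fin 7 → ZMod 2) :=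
  { ![0,0,0,0,0,0,0], ![1,1,1,1,0,0,0], ![0,0,1,1,1,1,0], ![1,0,1,0,1,0,1],
    ![1,1,0,0,1,1,0], ![0,1,0,1,1,0,1], ![1,0,0,1,0,1,1], ![0,1,1,0,0,1,1] }

lemma S_add : ∀ v ∈ S, ∀ w ∈ S, v + w ∈ S := by decide

lemma mem_e7 (v : Fin 7 → ZMod 2) : v ∈ e7 ↔ v ∈ S := by
  constructor
  · intro hv
    induction hv using Submodule.span_induction with
    | mem x h =>
      rcases h with h | h | h <;> subst h <;> decide
    | zero =>
      show (0 : Fin 7 → ZMod 2) ∈ S; decide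
    | add x y hx hy px py => exact S_add _ px _ py
    | smul a x hx px =>
      fin_cases a
      · change (0 : ZMod 2) • x ∈ S
        simpa using (show (0 : Fin 7 → ZMod 2) ∈ S by decide)
      · change (1 : ZMod 2) • x ∈ S
        simpa using px
  · intro hv
    have h1 : ![1,1,1,1,0,0,0] ∈ e7 := Submodule.subset_span (by simp)
    have h2 : ![0,0,1,1,1,1,0] ∈ e7 := Submodule.subset_span (by simp)
    have h3 : ![1,0,1,0,1,0,1] ∈ e7 := Submodule.subset_span (by simp)
    fin_cases hv
    · exact (by decide : (![0,0,0,0,0,0,0] : Fin 7 → ZMod 2) = 0) ▸ e7.zero_mem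
    · exact h1
    · exact h2
    · exact h3
    · exact (by decide : ![1,1,1,1,0,0,0] + ![0,0,1,1,1,1,0] = (![1,1,0,0,1,1,0] : Fin 7 → ZMod 2)) ▸ e7.add_mem h1 h2
    · exact (by decide : ![1,1,1,1,0,0,0] + ![1,0,1,0,1,0,1] = (![0,1,0,1,1,0,1] : Fin 7 → ZMod 2)) ▸ e7.add_mem h1 h3
    · exact (by decide : ![0,0,1,1,1,1,0] + ![1,0,1,0,1,0,1] = (![1,0,0,1,0,1,1] : Fin 7 → ZMod 2)) ▸ e7.add_mem h2 h3
    · exact (by decide : ![1,1,1,1,0,0,0] + (![0,0,1,1,1,1,0] + ![1,0,1,0,1,0,1]) = (![0,1,1,0,0,1,1] : Fin 7 → ZMod 2)) ▸ e7.add_mem h1 (e7.add_mem h2 h3)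

/-- The stability predicate: σ carries every codeword to a codeword. -/
def P (σ : Equiv.Perm (Fin 7)) : Prop := ∀ v ∈ S, v ∘ σ ∈ S

instance : DecidablePred P := fun σ => by unfold P; infer_instance

lemma P_one : P 1 := fun v hv => hv

lemma P_mul {σ τ : Equiv.Perm (Fin 7)} (hσ : P σ) (hτ : P τ) : P (σ * τ) :=
  fun v hv => hτ _ (hσ v hv)

lemma P_inv {σ : Equiv.Perm (Fin 7)} (hσ : P σ) : P σ⁻¹ := by
  intro v hv
  have hinj : Set.InjOn (fun w : Fin 7 → ZMod 2 => w ∘ σ) S := by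
    intro a _ b _ hab
    funext i
    have := congrFun hab (σ⁻¹ i)
    simpa using this
  have hmaps : Set.MapsTo (fun w : Fin 7 → ZMod 2 => w ∘ σ) S S := fun w hw => hσ w hw
  have hbij := (Set.Finite.injOn_iff_bijOn_of_mapsTo (Set.toFinite _) hmaps).1 hinj
  obtain ⟨w, hw, hwv⟩ := hbij.surjOn hv
  have : v ∘ ⇑σ⁻¹ = w := by
    funext i
    have := congrFun hwv (σ⁻¹ i)
    simp at this
    simp [← this]
  exact this ▸ hw

/-- The automorphism group as a subgroup. -/
def G : Subgroup (Equiv.Perm (Fin 7)) where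
  carrier := {σ | P σ}
  one_mem' := P_one
  mul_mem' := fun ha hb => P_mul ha hb
  inv_mem' := fun ha => P_inv ha

/-! ### Fast counting machinery -/

/-- Lift a permutation of `Fin n` to `Fin (n+1)` fixing `0`. -/
def liftPerm {n : ℕ} (e : Equiv.Perm (Fin n)) : Equiv.Perm (Fin (n + 1)) where
  toFun := Fin.cases 0 (fun i => (e i).succ)
  invFun := Fin.cases 0 (fun i => (e.symm i).succ)
  left_inv x := by cases x using Fin.cases <;> simp
  right_inv x := by cases x using Fin.cases <;> simp

/-- A cheap-to-evaluate version of `Equiv.Perm.decomposeFin.symm`. -/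
def mySymm {n : ℕ} (p : Fin (n + 1)) (e : Equiv.Perm (Fin n)) : Equiv.Perm (Fin (n + 1)) :=
  (liftPerm e).trans (Equiv.swap 0 p)

lemma mySymm_eq {n : ℕ} (p : Fin (n + 1)) (e : Equiv.Perm (Fin n)) :
    mySymm p e = Equiv.Perm.decomposeFin.symm (p, e) := by
  ext x
  cases x using Fin.cases with
  | zero => simp [mySymm, liftPerm, Equiv.Perm.decomposeFin_symm_apply_zero]
  | succ i => simp [mySymm, liftPerm, Equiv.Perm.decomposeFin_symm_apply_succ]

/-- Sum of `f` over all permutations of `Fin (n+1)`, organised as nested small sums. -/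
def sumPerm : ∀ n, (Equiv.Perm (Fin (n + 1)) → ℕ) → ℕ
  | 0, f => f 1
  | n + 1, f => ∑ a : Fin (n + 2), sumPerm n (fun e => f (mySymm a e))

lemma sumPerm_eq : ∀ n (f : Equiv.Perm (Fin (n + 1)) → ℕ), sumPerm n f = ∑ σ, f σ
  | 0, f => by
    have h : ∀ σ : Equiv.Perm (Fin (0 + 1)), σ = 1 :=
      fun σ => Equiv.ext fun x => Fin.ext (by omega)
    have huniv : (Finset.univ : Finset (Equiv.Perm (Fin (0 + 1)))) = {1} :=
      Finset.eq_singleton_iff_unique_mem.2 ⟨Finset.mem_univ _, fun σ _ => h σ⟩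
    rw [huniv, Finset.sum_singleton]
    rfl
  | n + 1, f => by
    rw [← Equiv.sum_comp (Equiv.Perm.decomposeFin (n := n + 1)).symm f,
      Fintype.sum_prod_type]
    simp only [sumPerm, sumPerm_eq n, mySymm_eq]

/-- Base-7 encoding of a 7-tuple. -/
def encT (t : Fin 7 → Fin 7) : ℕ :=
  (t 0).val + 7 * ((t 1).val + 7 * ((t 2).val + 7 * ((t 3).val + 7 * ((t 4).val + 7 *
    ((t 5).val + 7 * (t 6).val)))))

/-- Base-2 encoding of a codeword. -/
def encV (v : Fin 7 → ZMod 2) : ℕ :=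
  (v 0).val + 2 * ((v 1).val + 2 * ((v 2).val + 2 * ((v 3).val + 2 * ((v 4).val + 2 *
    ((v 5).val + 2 * (v 6).val)))))

def bitN (g d : ℕ) : ℕ := g / 2 ^ d % 2

/-- Given a bitmask `g` encoding a codeword `v` and `k` encoding a tuple `t`,
compute the encoding of `v ∘ t`, purely arithmetically. -/
def rowN (g k : ℕ) : ℕ :=
  bitN g (k % 7) + 2 * (bitN g (k / 7 % 7) + 2 * (bitN g (k / 49 % 7) + 2 *
    (bitN g (k / 343 % 7) + 2 * (bitN g (k / 2401 % 7) + 2 * (bitN g (k / 16807 % 7) + 2 *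
      bitN g (k / 117649 % 7))))))

def SL : List ℕ := [0, 15, 60, 85, 51, 90, 105, 102]

/-- The fast leaf function. -/
def FB (k : ℕ) : ℕ :=
  if rowN 15 k ∈ SL ∧ rowN 60 k ∈ SL ∧ rowN 85 k ∈ SL then 1 else 0

lemma digit_encT (t : Fin 7 → Fin 7) :
    encT t % 7 = (t 0).val ∧ encT t / 7 % 7 = (t 1).val ∧ encT t / 49 % 7 = (t 2).val ∧
    encT t / 343 % 7 = (t 3).val ∧ encT t / 2401 % 7 = (t 4).val ∧
    encT t / 16807 % 7 = (t 5).val ∧ encT t / 117649 % 7 = (t 6).val := by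
  have h0 := (t 0).isLt; have h1 := (t 1).isLt; have h2 := (t 2).isLt
  have h3 := (t 3).isLt; have h4 := (t 4).isLt; have h5 := (t 5).isLt
  have h6 := (t 6).isLt
  unfold encT
  omega

lemma bitN_encV : ∀ (v : Fin 7 → ZMod 2) (j : Fin 7), bitN (encV v) j.val = (v j).val := by
  decide

lemma rowN_eq (v : Fin 7 → ZMod 2) (t : Fin 7 → Fin 7) :
    rowN (encV v) (encT t) = encV (v ∘ t) := by
  obtain ⟨d0, d1, d2, d3, d4, d5, d6⟩ := digit_encT t
  rw [rowN, d0, d1, d2, d3, d4, d5, d6,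
    bitN_encV v (t 0), bitN_encV v (t 1), bitN_encV v (t 2), bitN_encV v (t 3),
    bitN_encV v (t 4), bitN_encV v (t 5), bitN_encV v (t 6)]
  rfl

lemma encS : ∀ w : Fin 7 → ZMod 2, encV w ∈ SL ↔ w ∈ S := by decide

lemma encV_g1 : encV ![1,1,1,1,0,0,0] = 15 := by decide
lemma encV_g2 : encV ![0,0,1,1,1,1,0] = 60 := by decide
lemma encV_g3 : encV ![1,0,1,0,1,0,1] = 85 := by decide

lemma P_iff (σ : Equiv.Perm (Fin 7)) :
    P σ ↔ (![1,1,1,1,0,0,0] ∘ ⇑σ ∈ S ∧ ![0,0,1,1,1,1,0] ∘ ⇑σ ∈ S ∧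
      ![1,0,1,0,1,0,1] ∘ ⇑σ ∈ S) := by
  constructor
  · intro h
    exact ⟨h _ (by decide), h _ (by decide), h _ (by decide)⟩
  · rintro ⟨q1, q2, q3⟩ v hv
    fin_cases hv
    · exact (by decide : (![0,0,0,0,0,0,0] : Fin 7 → ZMod 2) = 0) ▸
        (show ((0 : Fin 7 → ZMod 2)) ∈ S by decide)
    · exact q1
    · exact q2
    · exact q3
    · exact (by decide : (![1,1,0,0,1,1,0] : Fin 7 → ZMod 2) =
        ![1,1,1,1,0,0,0] + ![0,0,1,1,1,1,0]) ▸ S_add _ q1 _ q2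
    · exact (by decide : (![0,1,0,1,1,0,1] : Fin 7 → ZMod 2) =
        ![1,1,1,1,0,0,0] + ![1,0,1,0,1,0,1]) ▸ S_add _ q1 _ q3
    · exact (by decide : (![1,0,0,1,0,1,1] : Fin 7 → ZMod 2) =
        ![0,0,1,1,1,1,0] + ![1,0,1,0,1,0,1]) ▸ S_add _ q2 _ q3
    · exact (by decide : (![0,1,1,0,0,1,1] : Fin 7 → ZMod 2) =
        ![1,1,1,1,0,0,0] + (![0,0,1,1,1,1,0] + ![1,0,1,0,1,0,1])) ▸
        S_add _ q1 _ (S_add _ q2 _ q3)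

lemma leaf_eq (σ : Equiv.Perm (Fin 7)) : FB (encT ⇑σ) = if P σ then 1 else 0 := by
  have r1 : rowN 15 (encT ⇑σ) = encV (![1,1,1,1,0,0,0] ∘ ⇑σ) := by
    rw [← encV_g1, rowN_eq]
  have r2 : rowN 60 (encT ⇑σ) = encV (![0,0,1,1,1,1,0] ∘ ⇑σ) := by
    rw [← encV_g2, rowN_eq]
  have r3 : rowN 85 (encT ⇑σ) = encV (![1,0,1,0,1,0,1] ∘ ⇑σ) := by
    rw [← encV_g3, rowN_eq]
  rw [FB, r1, r2, r3]
  exact if_congr (by rw [P_iff σ, encS _, encS _, encS _]) rfl rfl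

lemma count_eq : sumPerm 6 (fun σ => FB (encT ⇑σ)) = 168 := by decide

/-- The permutations of the 7 coordinate positions which carry the set of codewords of
`e₇` onto itself form a group of order 168. -/
theorem aut_e7_card :
    ∃ G : Subgroup (Equiv.Perm (Fin 7)),
      (∀ σ : Equiv.Perm (Fin 7), σ ∈ G ↔ ∀ v ∈ e7, v ∘ σ ∈ e7) ∧
      Nat.card G = 168 := by
  refine ⟨G, fun σ => ?_, ?_⟩
  · constructor
    · intro hσ v hv
      exact (mem_e7 _).2 (hσ v ((mem_e7 _).1 hv))
    · intro h v hv
      exact (mem_e7 _).1 (h v ((mem_e7 _).2 hv))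
  · haveI : DecidablePred (· ∈ G) := fun σ => (inferInstance : Decidable (P σ))
    rw [Nat.card_eq_fintype_card, Fintype.card_subtype]
    have : (Finset.univ.filter (· ∈ G)).card = ∑ σ : Equiv.Perm (Fin 7), FB (encT ⇑σ) := by
      rw [Finset.card_eq_sum_ones, Finset.sum_filter]
      exact Finset.sum_congr rfl fun σ _ =>
        (if_congr (show (σ ∈ G) ↔ P σ from Iff.rfl) rfl rfl).trans (leaf_eq σ).symm
    rw [this, ← sumPerm_eq, count_eq]
end
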